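/- With notation as in the PageRank setup, the error vector ε = π - π̄, where π = (1-α)D^{1/2}(I - αQ)⁻¹D^{-1/2}v and π̄ = α d/vol(G) + (1-α)v, equals (1-α) D^{1/2} (Σ_{i≥2} (αλᵢ/(1-αλᵢ)) uᵢuᵢᵀ) D^{-1/2} v, where u₁ = D^{1/2}𝟙/√vol(G) and u₂,…,uₙ complete an orthonormal eigenbasis of Q with eigenvalues λ₂,…,λₙ. -/

import Mathlib

open Matrix Finset

theorem pagerank_error_decomposition {n : ℕ} (A : Matrix (Fin n) (Fin n) ℝ)
    (hAsym : A.IsSymm) (h01 : ∀ i j, A i j = 0 ∨ A i j = 1)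
    (d : Fin n → ℝ) (hd : ∀ i, d i = ∑ j, A i j) (hdpos : ∀ i, 0 < d i)
    (vol : ℝ) (hvol : vol = ∑ i, d i)
    (Dhalf Dinvhalf Q : Matrix (Fin n) (Fin n) ℝ)
    (hDhalf : Dhalf = Matrix.diagonal (fun i => Real.sqrt (d i)))
    (hDinvhalf : Dinvhalf = Matrix.diagonal (fun i => (Real.sqrt (d i))⁻¹))
    (hQ : Q = Dinvhalf * A * Dinvhalf)
    (u : Fin n → (Fin n → ℝ)) (lam : Fin n → ℝ)
    (horth : ∀ i j, dotProduct (u i) (u j) = if i = j then (1 : ℝ) else 0)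
    (hdecomp : Q = ∑ i, lam i • vecMulVec (u i) (u i))
    (hlam : ∀ i, |lam i| ≤ 1)
    (i₀ : Fin n) (hu₀ : u i₀ = fun i => Real.sqrt (d i) / Real.sqrt vol)
    (hlam₀ : lam i₀ = 1)
    (α : ℝ) (hα0 : 0 < α) (hα1 : α < 1)
    (v : Fin n → ℝ) (hvnn : ∀ i, 0 ≤ v i) (hvsum : ∑ i, v i = 1)
    (π πbar : Fin n → ℝ)
    (hπ : π = (1 - α) • (Dhalf * (1 - α • Q)⁻¹ * Dinvhalf).mulVec v)
    (hπbar : πbar = α • (fun i => d i / vol) + (1 - α) • v) :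
    π - πbar = (1 - α) • (Dhalf *
      (∑ i ∈ Finset.univ.erase i₀, (α * lam i / (1 - α * lam i)) • vecMulVec (u i) (u i))
      * Dinvhalf).mulVec v := by
  have hα1' : (1 : ℝ) - α ≠ 0 := by linarith
  have hne : ∀ i, (1 : ℝ) - α * lam i ≠ 0 := by
    intro i
    have h := hlam i
    have habs : |α * lam i| ≤ α := by
      rw [abs_mul, abs_of_pos hα0]
      nlinarith [abs_nonneg (lam i)]
    have : α * lam i < 1 := lt_of_le_of_lt (le_trans (le_abs_self _) habs) hα1
    linarith
  have hvolpos : 0 < vol := by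
    rw [hvol]
    exact Finset.sum_pos (fun i _ => hdpos i) ⟨i₀, Finset.mem_univ i₀⟩
  -- completeness of the orthonormal system
  set U : Matrix (Fin n) (Fin n) ℝ := Matrix.of u with hU
  have h1 : U * Uᵀ = 1 := by
    ext i j
    have := horth i j
    simpa [Matrix.mul_apply, dotProduct, Matrix.one_apply, hU] using this
  have h2 : Uᵀ * U = 1 := mul_eq_one_comm.mp h1
  have hcomplete : ∑ i, vecMulVec (u i) (u i) = (1 : Matrix (Fin n) (Fin n) ℝ) := by
    ext j k
    have := congrFun (congrFun h2 j) k
    simp only [Matrix.mul_apply, Matrix.transpose_apply, hU, Matrix.of_apply] at this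
    simpa [Matrix.sum_apply, vecMulVec_apply] using this
  -- products of rank-one projectors
  have hprod : ∀ i j, vecMulVec (u i) (u i) * vecMulVec (u j) (u j)
      = if i = j then vecMulVec (u i) (u i) else 0 := by
    intro i j
    have h := horth i j
    ext a b
    simp only [Matrix.mul_apply, vecMulVec_apply]
    have key : ∑ k, u i a * u i k * (u j k * u j b)
        = (u i a * u j b) * ∑ k, u i k * u j k := by
      rw [Finset.mul_sum]
      exact Finset.sum_congr rfl fun k _ => by ring
    rw [key]
    rw [show (∑ k, u i k * u j k) = dotProduct (u i) (u j) from rfl, h]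
    by_cases hij : i = j
    · subst hij; simp [vecMulVec_apply]
    · simp [hij]
  -- the explicit inverse
  set M : Matrix (Fin n) (Fin n) ℝ :=
      ∑ i, (1 - α * lam i)⁻¹ • vecMulVec (u i) (u i) with hMdef
  have hQM : Q * M = ∑ i, (lam i * (1 - α * lam i)⁻¹) • vecMulVec (u i) (u i) := by
    rw [hdecomp, hMdef, Finset.sum_mul]
    refine Finset.sum_congr rfl fun j _ => ?_
    rw [Matrix.smul_mul, Finset.mul_sum]
    simp_rw [Matrix.mul_smul, hprod]
    simp [smul_smul]
  have hMinv : (1 - α • Q) * M = 1 := by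
    rw [sub_mul, one_mul, Matrix.smul_mul, hQM, Finset.smul_sum]
    rw [hMdef, ← Finset.sum_sub_distrib, ← hcomplete]
    refine Finset.sum_congr rfl fun i _ => ?_
    rw [smul_smul, ← sub_smul]
    have h : (1 - α * lam i)⁻¹ - α * (lam i * (1 - α * lam i)⁻¹) = 1 := by
      have h0 := hne i
      field_simp
    rw [h, one_smul]
  have hinv : (1 - α • Q)⁻¹ = M := Matrix.inv_eq_right_inv hMinv
  -- split M into identity + spike + error part
  set S : Matrix (Fin n) (Fin n) ℝ :=
      ∑ i ∈ Finset.univ.erase i₀, (α * lam i / (1 - α * lam i)) • vecMulVec (u i) (u i)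
      with hSdef
  have hM : M = 1 + (α / (1 - α)) • vecMulVec (u i₀) (u i₀) + S := by
    have hc : ∀ i, ((1 : ℝ) - α * lam i)⁻¹ = 1 + α * lam i / (1 - α * lam i) := by
      intro i
      have h0 := hne i
      field_simp
      ring
    rw [hMdef]
    calc (∑ i, (1 - α * lam i)⁻¹ • vecMulVec (u i) (u i))
        = ∑ i, (vecMulVec (u i) (u i)
            + (α * lam i / (1 - α * lam i)) • vecMulVec (u i) (u i)) := by
          refine Finset.sum_congr rfl fun i _ => ?_
          rw [hc i, add_smul, one_smul]
      _ = (∑ i, vecMulVec (u i) (u i))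
            + ∑ i, (α * lam i / (1 - α * lam i)) • vecMulVec (u i) (u i) := by
          rw [Finset.sum_add_distrib]
      _ = 1 + ((α * lam i₀ / (1 - α * lam i₀)) • vecMulVec (u i₀) (u i₀) + S) := by
          rw [hcomplete, hSdef,
            ← Finset.add_sum_erase Finset.univ
              (fun i => (α * lam i / (1 - α * lam i)) • vecMulVec (u i) (u i))
              (Finset.mem_univ i₀)]
      _ = 1 + (α / (1 - α)) • vecMulVec (u i₀) (u i₀) + S := by
          simp only [hlam₀, mul_one]
          rw [← add_assoc]
  -- diagonal cancellation
  have hsd : ∀ i, Real.sqrt (d i) ≠ 0 := fun i => (Real.sqrt_pos.mpr (hdpos i)).ne'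
  have hDD : Dhalf * Dinvhalf = 1 := by
    rw [hDhalf, hDinvhalf, Matrix.diagonal_mul_diagonal]
    have : (fun i => Real.sqrt (d i) * (Real.sqrt (d i))⁻¹) = fun _ => (1 : ℝ) :=
      funext fun i => mul_inv_cancel₀ (hsd i)
    rw [this, Matrix.diagonal_one]
  -- the spike term
  have hBv : (Dhalf * vecMulVec (u i₀) (u i₀) * Dinvhalf).mulVec v
      = fun i => d i / vol := by
    funext i
    have hsv : Real.sqrt vol ≠ 0 := (Real.sqrt_pos.mpr hvolpos).ne'
    have hterm : ∀ j, (Dhalf * vecMulVec (u i₀) (u i₀) * Dinvhalf) i j * v j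
        = d i / vol * v j := by
      intro j
      rw [hDhalf, hDinvhalf, Matrix.mul_diagonal, Matrix.mul_apply]
      have : ∑ k, Matrix.diagonal (fun i => Real.sqrt (d i)) i k
            * vecMulVec (u i₀) (u i₀) k j
          = Real.sqrt (d i) * (u i₀ i * u i₀ j) := by
        rw [Finset.sum_eq_single i]
        · simp [vecMulVec_apply]
        · intro k _ hk
          simp [Matrix.diagonal_apply, Ne.symm hk, vecMulVec_apply]
        · simp
      rw [this, hu₀]
      have h1 : Real.sqrt (d i) * Real.sqrt (d i) = d i :=
        Real.mul_self_sqrt (hdpos i).le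
      have h2 : Real.sqrt vol * Real.sqrt vol = vol :=
        Real.mul_self_sqrt hvolpos.le
      have key : Real.sqrt (d i) * (Real.sqrt (d i) / Real.sqrt vol
            * (Real.sqrt (d j) / Real.sqrt vol)) * (Real.sqrt (d j))⁻¹ = d i / vol := by
        calc Real.sqrt (d i) * (Real.sqrt (d i) / Real.sqrt vol
              * (Real.sqrt (d j) / Real.sqrt vol)) * (Real.sqrt (d j))⁻¹
            = (Real.sqrt (d i) * Real.sqrt (d i))
              * (Real.sqrt (d j) * (Real.sqrt (d j))⁻¹)
              * (Real.sqrt vol * Real.sqrt vol)⁻¹ := by ring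
          _ = d i / vol := by
              rw [h1, h2, mul_inv_cancel₀ (hsd j), mul_one, div_eq_mul_inv]
      calc Real.sqrt (d i) * ((fun i => Real.sqrt (d i) / Real.sqrt vol) i
            * (fun i => Real.sqrt (d i) / Real.sqrt vol) j) * (Real.sqrt (d j))⁻¹ * v j
          = Real.sqrt (d i) * (Real.sqrt (d i) / Real.sqrt vol
            * (Real.sqrt (d j) / Real.sqrt vol)) * (Real.sqrt (d j))⁻¹ * v j := rfl
        _ = d i / vol * v j := by rw [key]
    rw [Matrix.mulVec, dotProduct]
    calc ∑ j, (Dhalf * vecMulVec (u i₀) (u i₀) * Dinvhalf) i j * v j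
        = ∑ j, d i / vol * v j := Finset.sum_congr rfl fun j _ => hterm j
      _ = d i / vol := by rw [← Finset.mul_sum, hvsum, mul_one]
  -- put everything together
  rw [hπ, hπbar, hinv, hM]
  rw [mul_add, mul_add, add_mul, add_mul, Matrix.mul_smul, Matrix.smul_mul, mul_one]
  rw [hDD, Matrix.add_mulVec, Matrix.add_mulVec, Matrix.one_mulVec,
    Matrix.smul_mulVec, hBv]
  funext i
  simp only [Pi.smul_apply, Pi.add_apply, Pi.sub_apply, smul_eq_mul]
  field_simp
  ring
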